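/- Let C₀ > 0 and set k̂ = 3/(4αC₀²). For every k ∈ (0, k̂] and every v ∈ ℝ with |v| ≤ C₀, one has |G⁻¹(v)| ≤ (αk)^{−1/2}; in particular, if a function v satisfies ‖v‖_∞ ≤ C₀ then ‖G⁻¹∘v‖_∞ ≤ (αk)^{−1/2}. -/

import Mathlib

open Real Filter Set

/-- The constant α = (9+3√5)/2. -/
noncomputable def alph : ℝ := (9 + 3 * Real.sqrt 5) / 2

/-- The constant β = 2 α^{3/2} √(α−1). -/
noncomputable def bet : ℝ := 2 * alph ^ ((3 : ℝ) / 2) * Real.sqrt (alph - 1)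

/-- The change-of-variable function g (extended evenly to negative arguments):
g(s) = √(1 − k s²) for |s| < (αk)^{−1/2}, and g(s) = 1/(βk s²) + √3/2 for |s| ≥ (αk)^{−1/2}. -/
noncomputable def g (k s : ℝ) : ℝ :=
  if |s| < 1 / Real.sqrt (alph * k) then Real.sqrt (1 - k * s ^ 2)
  else 1 / (bet * k * s ^ 2) + Real.sqrt 3 / 2

/-- G(t) = ∫₀ᵗ g(s) ds. -/
noncomputable def G (k t : ℝ) : ℝ := ∫ s in (0 : ℝ)..t, g k s

lemma sqrt5_gt : (2 : ℝ) < Real.sqrt 5 := by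
  nlinarith [Real.sq_sqrt (show (0:ℝ) ≤ 5 by norm_num), Real.sqrt_nonneg 5]

lemma alph_gt_four : (4 : ℝ) < alph := by
  unfold alph; nlinarith [sqrt5_gt]

lemma alph_pos : (0 : ℝ) < alph := by linarith [alph_gt_four]

lemma bet_pos : (0 : ℝ) < bet := by
  unfold bet
  have h1 : (0:ℝ) < alph ^ ((3:ℝ)/2) := Real.rpow_pos_of_pos alph_pos _
  have h2 : (0:ℝ) < Real.sqrt (alph - 1) := Real.sqrt_pos.mpr (by linarith [alph_gt_four])
  positivity

lemma sqrt3_half : Real.sqrt 3 / 2 = Real.sqrt (3/4) := by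
  rw [show (3:ℝ)/4 = (Real.sqrt 3 / 2)^2 by
    rw [div_pow, Real.sq_sqrt (by norm_num : (0:ℝ) ≤ 3)]; norm_num,
    Real.sqrt_sq (by positivity)]

lemma g_ge (k : ℝ) (hk : 0 < k) (s : ℝ) : Real.sqrt 3 / 2 ≤ g k s := by
  have hak : 0 < alph * k := mul_pos alph_pos hk
  have hb := bet_pos
  unfold g
  split_ifs with h
  · have hs2 : s ^ 2 < 1 / (alph * k) := by
      have := pow_lt_pow_left₀ h (abs_nonneg s) (n := 2) (by norm_num)
      rw [sq_abs] at this
      calc s ^ 2 < (1 / Real.sqrt (alph * k)) ^ 2 := this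
        _ = 1 / (alph * k) := by
            rw [div_pow, Real.sq_sqrt hak.le]; norm_num
    have hks : k * s ^ 2 < 1 / alph := by
      have := mul_lt_mul_of_pos_left hs2 hk
      calc k * s ^ 2 < k * (1 / (alph * k)) := this
        _ = 1 / alph := by
            rw [one_div (alph*k), mul_inv, mul_comm alph⁻¹ k⁻¹, ← mul_assoc, mul_inv_cancel₀ hk.ne', one_mul, one_div]
    have hfrac : 1 / alph ≤ 1 / 4 := by
      apply one_div_le_one_div_of_le (by norm_num) alph_gt_four.le
    rw [sqrt3_half]
    apply Real.sqrt_le_sqrt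
    linarith
  · push_neg at h
    have hs : 0 < |s| := lt_of_lt_of_le (by positivity) h
    have hs0 : s ≠ 0 := abs_pos.mp hs
    have : 0 < 1 / (bet * k * s ^ 2) := by positivity
    linarith

lemma g_le (k : ℝ) (hk : 0 < k) (s : ℝ) : g k s ≤ 1 + alph / bet + Real.sqrt 3 / 2 := by
  have hak : 0 < alph * k := mul_pos alph_pos hk
  have hb := bet_pos
  have ha := alph_pos
  unfold g
  split_ifs with h
  · have h1 : Real.sqrt (1 - k * s ^ 2) ≤ 1 := Real.sqrt_le_one.mpr (by nlinarith)
    have h2 : (0:ℝ) ≤ alph / bet := by positivity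
    have := Real.sqrt_nonneg 3
    linarith
  · push_neg at h
    have hs : 0 < |s| := lt_of_lt_of_le (by positivity) h
    have hs0 : s ≠ 0 := abs_pos.mp hs
    have hs2 : 1 / (alph * k) ≤ s ^ 2 := by
      have := pow_le_pow_left₀ (by positivity) h (n := 2)
      rw [sq_abs] at this
      calc 1 / (alph * k) = (1 / Real.sqrt (alph * k)) ^ 2 := by
            rw [div_pow, Real.sq_sqrt hak.le]; norm_num
        _ ≤ s ^ 2 := this
    have hbd : 1 / (bet * k * s ^ 2) ≤ alph / bet := by
      rw [div_le_div_iff₀ (by positivity) hb]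
      have hmul : bet * (1 / (alph * k)) ≤ bet * s ^ 2 :=
        mul_le_mul_of_nonneg_left hs2 hb.le
      calc 1 * bet = bet := one_mul bet
        _ = (alph * k) * (bet * (1/(alph*k))) := by field_simp
        _ ≤ (alph * k) * (bet * s ^ 2) := mul_le_mul_of_nonneg_left hmul hak.le
        _ = alph * (bet * k * s ^ 2) := by ring
    linarith

lemma g_meas (k : ℝ) : Measurable (g k) := by
  unfold g
  apply Measurable.ite
  · exact measurableSet_lt (measurable_abs) measurable_const
  · fun_prop
  · fun_prop

lemma g_intble (k : ℝ) (hk : 0 < k) (a b : ℝ) :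
    IntervalIntegrable (g k) MeasureTheory.volume a b := by
  rw [intervalIntegrable_iff]
  apply MeasureTheory.Integrable.mono'
    ((MeasureTheory.integrableOn_const_iff (C := 1 + alph / bet + Real.sqrt 3 / 2)).mpr
      (Or.inr measure_Ioc_lt_top))
  · exact (g_meas k).aestronglyMeasurable
  · filter_upwards with s
    rw [Real.norm_eq_abs, abs_of_nonneg (le_trans (by positivity) (g_ge k hk s))]
    exact g_le k hk s

lemma G_incr (k : ℝ) (hk : 0 < k) {a b : ℝ} (hab : a ≤ b) :
    Real.sqrt 3 / 2 * (b - a) ≤ G k b - G k a := by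
  unfold G
  rw [intervalIntegral.integral_interval_sub_left (g_intble k hk 0 b) (g_intble k hk 0 a)]
  have h := intervalIntegral.integral_mono_on hab (intervalIntegrable_const) (g_intble k hk a b)
    (fun x _ => g_ge k hk x)
  rw [intervalIntegral.integral_const, smul_eq_mul] at h
  linarith

lemma G_strict (k : ℝ) (hk : 0 < k) : StrictMono (G k) := by
  intro a b hab
  have h := G_incr k hk hab.le
  have h3 : (0:ℝ) < Real.sqrt 3 := Real.sqrt_pos.mpr (by norm_num)
  nlinarith

/-- For C₀ > 0 and k̂ = 3/(4αC₀²): for every k ∈ (0, k̂] and every v with |v| ≤ C₀,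
|G⁻¹(v)| ≤ (αk)^{−1/2}; in particular, for any function v with ‖v‖_∞ ≤ C₀ one has
‖G⁻¹∘v‖_∞ ≤ (αk)^{−1/2}. -/
theorem stmt19 (C₀ : ℝ) (hC₀ : 0 < C₀) :
    ∀ k : ℝ, 0 < k → k ≤ 3 / (4 * alph * C₀ ^ 2) →
      ∀ Ginv : ℝ → ℝ, Function.LeftInverse Ginv (G k) →
        Function.RightInverse Ginv (G k) →
        (∀ v : ℝ, |v| ≤ C₀ → |Ginv v| ≤ 1 / Real.sqrt (alph * k)) ∧
        ∀ (X : Type) (v : X → ℝ), (∀ x, |v x| ≤ C₀) →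
          ∀ x, |Ginv (v x)| ≤ 1 / Real.sqrt (alph * k) := by
  intro k hk hkle Ginv hL hRi
  have main : ∀ v : ℝ, |v| ≤ C₀ → |Ginv v| ≤ 1 / Real.sqrt (alph * k) := by
    intro v hv
    have hak : 0 < alph * k := mul_pos alph_pos hk
    have hsak : 0 < Real.sqrt (alph * k) := Real.sqrt_pos.mpr hak
    set R := 1 / Real.sqrt (alph * k) with hRdef
    have hRpos : 0 < R := by positivity
    have hCR : C₀ ≤ Real.sqrt 3 / 2 * R := by
      have h0 := hkle
      rw [le_div_iff₀ (by have := alph_pos; positivity)] at h0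
      have h1 : alph * k * C₀ ^ 2 ≤ 3 / 4 := by nlinarith
      have hsq : (Real.sqrt (alph * k) * C₀) ^ 2 ≤ (Real.sqrt 3 / 2) ^ 2 := by
        rw [mul_pow, Real.sq_sqrt hak.le, div_pow, Real.sq_sqrt (by norm_num : (0:ℝ) ≤ 3)]
        norm_num
        linarith
      have h2 : Real.sqrt (alph * k) * C₀ ≤ Real.sqrt 3 / 2 := by
        have := Real.sqrt_le_sqrt hsq
        rwa [Real.sqrt_sq (by positivity), Real.sqrt_sq (by positivity)] at this
      rw [hRdef, mul_one_div, le_div_iff₀ hsak, mul_comm]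
      exact h2
    have hG0 : G k 0 = 0 := intervalIntegral.integral_same
    have hGR : C₀ ≤ G k R := by
      have := G_incr k hk hRpos.le
      rw [hG0] at this
      simp only [sub_zero] at this
      linarith
    have hGmR : G k (-R) ≤ -C₀ := by
      have := G_incr k hk (show -R ≤ (0:ℝ) by linarith)
      rw [hG0] at this
      have h2 : Real.sqrt 3 / 2 * R ≤ - G k (-R) := by linarith
      linarith
    have hmono := G_strict k hk
    have hGinv : G k (Ginv v) = v := hRi v
    rw [abs_le] at hv ⊢
    constructor
    · rw [← hmono.le_iff_le, hGinv]
      linarith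
    · rw [← hmono.le_iff_le, hGinv]
      linarith
  exact ⟨main, fun X v hv x => main (v x) (hv x)⟩
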